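/- Let n ≥ 2, μ > 0, a > 0, and define ū(t,r) = r/(t·f(t,r)) with f(t,r) = 1 + a(4πμt)^{n/2}exp(r²/(4μt)). If 1 ≤ p < n/2, then ∫₀^∞ (|ū_r(t,r)|^p + |ū(t,r)/r|^p)·r^{n-1} dr → 0 as t → 0+. -/

import Mathlib

open Real Filter Topology MeasureTheory Set

lemma rpow_add_le_aux {x y p : ℝ} (hx : 0 ≤ x) (hy : 0 ≤ y) (hp : 0 ≤ p) :
    (x + y) ^ p ≤ 2 ^ p * (x ^ p + y ^ p) := by
  rcases le_total x y with h | h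
  · calc (x + y) ^ p ≤ (2 * y) ^ p := by
          apply Real.rpow_le_rpow (by linarith) (by linarith) hp
        _ = 2 ^ p * y ^ p := Real.mul_rpow (by norm_num) hy
        _ ≤ 2 ^ p * (x ^ p + y ^ p) := by
          have := Real.rpow_nonneg hx p
          have h2 : (0:ℝ) ≤ 2 ^ p := Real.rpow_nonneg (by norm_num) p
          nlinarith
  · calc (x + y) ^ p ≤ (2 * x) ^ p := by
          apply Real.rpow_le_rpow (by linarith) (by linarith) hp
        _ = 2 ^ p * x ^ p := Real.mul_rpow (by norm_num) hx
        _ ≤ 2 ^ p * (x ^ p + y ^ p) := by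
          have := Real.rpow_nonneg hy p
          have h2 : (0:ℝ) ≤ 2 ^ p := Real.rpow_nonneg (by norm_num) p
          nlinarith

lemma gauss_eval {b c : ℝ} (hb : 0 < b) (hc : -1 < c) :
    ∫ r in Ioi (0:ℝ), r ^ c * Real.exp (-b * r ^ 2) =
      b ^ (-(c+1)/2) * (1/2) * Real.Gamma ((c+1)/2) := by
  rw [← integral_rpow_mul_exp_neg_mul_rpow (by norm_num : (0:ℝ) < 2) hc hb]
  refine setIntegral_congr_fun measurableSet_Ioi fun x hx => ?_
  norm_num [Real.rpow_natCast]

set_option maxHeartbeats 2000000 in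
theorem stmt_19 (n : ℕ) (hn : 2 ≤ n) (μ a p : ℝ) (hμ : 0 < μ) (ha : 0 < a)
    (hp1 : 1 ≤ p) (hpn : p < (n:ℝ)/2)
    (ubar : ℝ → ℝ → ℝ)
    (hubar : ∀ t r, ubar t r
      = r / (t * (1 + a * (4*π*μ*t) ^ ((n:ℝ)/2) * Real.exp (r^2/(4*μ*t))))) :
    Tendsto (fun t : ℝ =>
        ∫ r in Ioi (0:ℝ),
          (|deriv (fun ρ => ubar t ρ) r| ^ p + |ubar t r / r| ^ p) * r ^ ((n:ℝ)-1))
      (𝓝[>] 0) (𝓝 0) := by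
  have hp0 : (0:ℝ) < p := lt_of_lt_of_le one_pos hp1
  have hn0 : (0:ℝ) < (n:ℝ) := by positivity
  have hnp : p * 2 < (n:ℝ) := by linarith [hpn]
  -- parameters
  set θ : ℝ := min 1 (((n:ℝ) - 2*p)/(2*(n:ℝ)*p)) with hθdef
  have hθ0 : 0 < θ := by
    apply lt_min one_pos
    apply div_pos (by linarith) (by positivity)
  have hθ1 : θ ≤ 1 := min_le_left _ _
  set γ : ℝ := θ*p/(4*μ) with hγdef
  have hγ0 : 0 < γ := by positivity
  set e : ℝ := (n:ℝ)/2 - p - θ*(n:ℝ)*p/2 with hedef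
  have he : 0 < e := by
    have h1 : θ ≤ ((n:ℝ) - 2*p)/(2*(n:ℝ)*p) := min_le_right _ _
    have h2 : θ*(n:ℝ)*p/2 ≤ ((n:ℝ) - 2*p)/4 := by
      have := (le_div_iff₀ (by positivity : (0:ℝ) < 2*(n:ℝ)*p)).1 h1
      nlinarith
    have h3 : ((n:ℝ) - 2*p)/4 < (n:ℝ)/2 - p := by linarith
    rw [hedef]; linarith
  set b : ℝ := a * (4*π*μ) ^ ((n:ℝ)/2) with hbdef
  have hb0 : 0 < b := by
    have hπ := Real.pi_pos
    positivity
  set K : ℝ := 2*2^p * b^(-(θ*p)) * γ^(-(((n:ℝ)-1)+1)/2) * (1/2) * Real.Gamma ((((n:ℝ)-1)+1)/2)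
    + 2*2^p * b^(-(θ*p)) * (2*μ)^(-p) * γ^(-((2*p+((n:ℝ)-1))+1)/2) * (1/2)
        * Real.Gamma (((2*p+((n:ℝ)-1))+1)/2) with hKdef
  -- squeeze
  have hupper : ∀ t ∈ Ioi (0:ℝ),
      (∫ r in Ioi (0:ℝ),
          (|deriv (fun ρ => ubar t ρ) r| ^ p + |ubar t r / r| ^ p) * r ^ ((n:ℝ)-1))
        ≤ K * t ^ e := by
    intro t ht
    have ht0 : (0:ℝ) < t := ht
    have hβ0 : (0:ℝ) < γ/t := by positivity
    set A : ℝ := (b * t^((n:ℝ)/2))^(-(θ*p)) with hAdef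
    have hA0 : 0 < A := by positivity
    set C₁ : ℝ := 2*2^p * A * t^(-p) with hC₁def
    set C₂ : ℝ := 2*2^p * A * (2*μ)^(-p) * t^(-(2*p)) with hC₂def
    have hC₁0 : 0 < C₁ := by positivity
    have hC₂0 : 0 < C₂ := by positivity
    have hc₁ : (-1:ℝ) < (n:ℝ)-1 := by linarith
    have hc₂ : (-1:ℝ) < 2*p+((n:ℝ)-1) := by linarith
    -- pointwise bound
    have hpt : ∀ r ∈ Ioi (0:ℝ),
        (|deriv (fun ρ => ubar t ρ) r| ^ p + |ubar t r / r| ^ p) * r ^ ((n:ℝ)-1)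
          ≤ C₁ * (r ^ ((n:ℝ)-1) * Real.exp (-(γ/t) * r^2))
            + C₂ * (r ^ (2*p+((n:ℝ)-1)) * Real.exp (-(γ/t) * r^2)) := by
      intro r hr
      have hr0 : (0:ℝ) < r := hr
      have hπ := Real.pi_pos
      have htne : t ≠ 0 := ht0.ne'
      have hμne : μ ≠ 0 := hμ.ne'
      have hrne : r ≠ 0 := hr0.ne'
      set c₀ : ℝ := a * (4*π*μ*t) ^ ((n:ℝ)/2) with hc₀def
      have hc₀0 : 0 < c₀ := by rw [hc₀def]; positivity
      set q : ℝ := r^2/(4*μ*t) with hqdef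
      set E : ℝ := Real.exp q with hEdef
      have hE0 : 0 < E := Real.exp_pos q
      set f : ℝ := 1 + c₀ * E with hfdef
      have hf1 : 1 ≤ f := by rw [hfdef]; nlinarith
      have hf0 : 0 < f := by linarith
      have hfne : f ≠ 0 := hf0.ne'
      -- derivative computation
      have hfun : (fun ρ => ubar t ρ)
          = fun ρ => ρ / (t * (1 + c₀ * Real.exp (ρ^2/(4*μ*t)))) := by
        funext ρ; rw [hubar, hc₀def]
      have hq' : HasDerivAt (fun ρ:ℝ => ρ^2/(4*μ*t)) (2*r/(4*μ*t)) r := by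
        simpa using (hasDerivAt_pow 2 r).div_const (4*μ*t)
      have hE' : HasDerivAt (fun ρ => Real.exp (ρ^2/(4*μ*t))) (E * (2*r/(4*μ*t))) r := hq'.exp
      have hden : HasDerivAt (fun ρ => t * (1 + c₀ * Real.exp (ρ^2/(4*μ*t))))
          (t * (c₀ * (E * (2*r/(4*μ*t))))) r :=
        ((hE'.const_mul c₀).const_add 1).const_mul t
      have hu : HasDerivAt (fun ρ => ρ / (t * (1 + c₀ * Real.exp (ρ^2/(4*μ*t)))))
          ((1 * (t * f) - r * (t * (c₀ * (E * (2*r/(4*μ*t)))))) / (t * f)^2) r :=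
        (hasDerivAt_id r).div hden (by positivity)
      have hderiv : deriv (fun ρ => ubar t ρ) r
          = (1 * (t * f) - r * (t * (c₀ * (E * (2*r/(4*μ*t)))))) / (t * f)^2 := by
        rw [hfun]; exact hu.deriv
      have hD2 : deriv (fun ρ => ubar t ρ) r = (f - c₀ * E * r^2/(2*μ*t)) / (t * f^2) := by
        rw [hderiv]; field_simp; ring
      -- the two basic quantities
      set X : ℝ := 1/(t*f) with hXdef
      set Y : ℝ := r^2/(2*μ*t^2*f) with hYdef
      have hX0 : 0 ≤ X := by rw [hXdef]; positivity
      have hY0 : 0 ≤ Y := by rw [hYdef]; positivity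
      have habsD : |deriv (fun ρ => ubar t ρ) r| ≤ X + Y := by
        rw [hD2, abs_div, abs_of_pos (by positivity : (0:ℝ) < t*f^2)]
        have hw0 : (0:ℝ) ≤ c₀*E*r^2/(2*μ*t) := by positivity
        have h1 : |f - c₀*E*r^2/(2*μ*t)| ≤ f + c₀*E*r^2/(2*μ*t) := by
          rw [abs_le]; constructor <;> linarith
        calc |f - c₀*E*r^2/(2*μ*t)| / (t*f^2) ≤ (f + c₀*E*r^2/(2*μ*t))/(t*f^2) := by gcongr
          _ ≤ X + Y := by
              rw [hXdef, hYdef]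
              have e1 : (f + c₀*E*r^2/(2*μ*t))/(t*f^2)
                  = 1/(t*f) + (c₀*E/f) * (r^2/(2*μ*t^2*f)) := by field_simp
              rw [e1]
              have e2 : c₀*E/f ≤ 1 := by
                rw [div_le_one hf0, hfdef]; linarith
              have e3 : (c₀*E/f) * (r^2/(2*μ*t^2*f)) ≤ 1 * (r^2/(2*μ*t^2*f)) :=
                mul_le_mul_of_nonneg_right e2 (by positivity)
              linarith
      have habsu : |ubar t r / r| = X := by
        have h2 : ubar t r / r = X := by
          rw [hubar, hXdef, hfdef, hEdef, hqdef, hc₀def]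
          field_simp
        rw [h2, abs_of_nonneg hX0]
      have h1 : |deriv (fun ρ => ubar t ρ) r| ^ p + |ubar t r / r| ^ p
          ≤ 2 * ((X + Y) ^ p) := by
        have a1 : |deriv (fun ρ => ubar t ρ) r| ^ p ≤ (X+Y)^p :=
          Real.rpow_le_rpow (abs_nonneg _) habsD hp0.le
        have a2 : |ubar t r / r| ^ p ≤ (X+Y)^p := by
          rw [habsu]; exact Real.rpow_le_rpow hX0 (by linarith) hp0.le
        linarith
      have h2 : (X+Y)^p ≤ 2^p * (X^p + Y^p) := rpow_add_le_aux hX0 hY0 hp0.le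
      -- the lower bound Z for f
      set Z : ℝ := b * t^((n:ℝ)/2) * E with hZdef
      have hZ0 : 0 < Z := by rw [hZdef]; positivity
      have hc₀Z : c₀ * E = Z := by
        rw [hZdef, hc₀def, hbdef, show 4*π*μ*t = (4*π*μ)*t by ring,
          Real.mul_rpow (by positivity) ht0.le]
        ring
      have hZf : Z ≤ f := by rw [hfdef, ← hc₀Z]; linarith
      have hfinv : f⁻¹ ≤ Z^(-θ) := by
        rcases le_total Z 1 with hZ1 | hZ1
        · have hz : (1:ℝ) ≤ Z^(-θ) := by
            calc (1:ℝ) = Z^(0:ℝ) := (Real.rpow_zero Z).symm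
            _ ≤ Z^(-θ) := Real.rpow_le_rpow_of_exponent_ge hZ0 hZ1 (by linarith)
          calc f⁻¹ ≤ 1 := by
                rw [inv_le_one_iff₀]; right; exact hf1
            _ ≤ Z^(-θ) := hz
        · calc f⁻¹ ≤ Z⁻¹ := by gcongr
            _ = Z^(-1:ℝ) := (Real.rpow_neg_one Z).symm
            _ ≤ Z^(-θ) := Real.rpow_le_rpow_of_exponent_le hZ1 (by linarith)
      have hZθp : (Z^(-θ))^p = Z^(-(θ*p)) := by
        rw [← Real.rpow_mul hZ0.le, neg_mul]
      have hEexp : Z^(-(θ*p)) = A * Real.exp (-(γ/t)*r^2) := by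
        rw [hZdef, hEdef, hAdef,
          Real.mul_rpow (by positivity) (Real.exp_pos q).le, ← Real.exp_mul]
        congr 1
        rw [hqdef, hγdef]
        field_simp
      have hXp : X^p ≤ t^(-p) * Z^(-(θ*p)) := by
        have hXle : X ≤ t⁻¹ * Z^(-θ) := by
          rw [hXdef, one_div, mul_inv]
          exact mul_le_mul_of_nonneg_left hfinv (by positivity)
        calc X^p ≤ (t⁻¹ * Z^(-θ))^p := Real.rpow_le_rpow hX0 hXle hp0.le
          _ = (t⁻¹)^p * (Z^(-θ))^p :=
              Real.mul_rpow (by positivity) (by positivity)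
          _ = t^(-p) * Z^(-(θ*p)) := by
              rw [Real.inv_rpow ht0.le, ← Real.rpow_neg ht0.le, hZθp]
      have hYp : Y^p ≤ (2*μ)^(-p) * t^(-(2*p)) * r^(2*p) * Z^(-(θ*p)) := by
        have hYle : Y ≤ (r^2/(2*μ*t^2)) * Z^(-θ) := by
          rw [hYdef]
          have e4 : r^2/(2*μ*t^2*f) = (r^2/(2*μ*t^2)) * f⁻¹ := by
            field_simp
          rw [e4]
          exact mul_le_mul_of_nonneg_left hfinv (by positivity)
        have e5 : (r^2/(2*μ*t^2))^p = (2*μ)^(-p) * t^(-(2*p)) * r^(2*p) := by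
          rw [Real.div_rpow (by positivity) (by positivity),
            Real.mul_rpow (by positivity) (by positivity),
            ← Real.rpow_natCast r 2, ← Real.rpow_mul hr0.le,
            ← Real.rpow_natCast t 2, ← Real.rpow_mul ht0.le,
            Real.rpow_neg (by positivity : (0:ℝ) ≤ 2*μ), Real.rpow_neg ht0.le]
          push_cast
          have hne1 : (2*μ)^p ≠ 0 := by positivity
          have hne2 : t^(2*p) ≠ 0 := by positivity
          field_simp
        calc Y^p ≤ ((r^2/(2*μ*t^2)) * Z^(-θ))^p := Real.rpow_le_rpow hY0 hYle hp0.le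
          _ = (r^2/(2*μ*t^2))^p * (Z^(-θ))^p :=
              Real.mul_rpow (by positivity) (by positivity)
          _ = (2*μ)^(-p) * t^(-(2*p)) * r^(2*p) * Z^(-(θ*p)) := by
              rw [hZθp, e5]
      -- put everything together
      have hrn : (0:ℝ) ≤ r^((n:ℝ)-1) := Real.rpow_nonneg hr0.le _
      have h2p : (0:ℝ) ≤ 2^p := Real.rpow_nonneg (by norm_num) p
      calc (|deriv (fun ρ => ubar t ρ) r| ^ p + |ubar t r / r| ^ p) * r ^ ((n:ℝ)-1)
          ≤ (2 * ((X+Y)^p)) * r^((n:ℝ)-1) := mul_le_mul_of_nonneg_right h1 hrn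
        _ ≤ (2 * (2^p * (X^p + Y^p))) * r^((n:ℝ)-1) := by
            apply mul_le_mul_of_nonneg_right _ hrn
            linarith
        _ = (2*2^p*(X^p)) * r^((n:ℝ)-1) + (2*2^p*(Y^p)) * r^((n:ℝ)-1) := by ring
        _ ≤ (2*2^p*(t^(-p) * Z^(-(θ*p)))) * r^((n:ℝ)-1)
            + (2*2^p*((2*μ)^(-p) * t^(-(2*p)) * r^(2*p) * Z^(-(θ*p)))) * r^((n:ℝ)-1) := by
            gcongr
        _ = C₁ * (r ^ ((n:ℝ)-1) * Real.exp (-(γ/t) * r^2))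
            + C₂ * (r ^ (2*p+((n:ℝ)-1)) * Real.exp (-(γ/t) * r^2)) := by
            rw [hC₁def, hC₂def, hEexp, Real.rpow_add hr0]
            ring
    -- integrability of the dominating function
    have hint1 : IntegrableOn (fun r : ℝ => C₁ * (r ^ ((n:ℝ)-1) * Real.exp (-(γ/t) * r^2)))
        (Ioi (0:ℝ)) := (integrableOn_rpow_mul_exp_neg_mul_sq hβ0 hc₁).const_mul C₁
    have hint2 : IntegrableOn (fun r : ℝ => C₂ * (r ^ (2*p+((n:ℝ)-1)) * Real.exp (-(γ/t) * r^2)))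
        (Ioi (0:ℝ)) := (integrableOn_rpow_mul_exp_neg_mul_sq hβ0 hc₂).const_mul C₂
    have hmono : (∫ r in Ioi (0:ℝ),
          (|deriv (fun ρ => ubar t ρ) r| ^ p + |ubar t r / r| ^ p) * r ^ ((n:ℝ)-1))
        ≤ ∫ r in Ioi (0:ℝ),
            (C₁ * (r ^ ((n:ℝ)-1) * Real.exp (-(γ/t) * r^2))
              + C₂ * (r ^ (2*p+((n:ℝ)-1)) * Real.exp (-(γ/t) * r^2))) := by
      apply integral_mono_of_nonneg
      · refine (ae_restrict_iff' measurableSet_Ioi).2 (ae_of_all _ fun r hr => ?_)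
        have h1 : (0:ℝ) ≤ |deriv (fun ρ => ubar t ρ) r| ^ p := Real.rpow_nonneg (abs_nonneg _) _
        have h2 : (0:ℝ) ≤ |ubar t r / r| ^ p := Real.rpow_nonneg (abs_nonneg _) _
        have h3 : (0:ℝ) ≤ r ^ ((n:ℝ)-1) := Real.rpow_nonneg (le_of_lt hr) _
        positivity
      · exact hint1.add hint2
      · exact (ae_restrict_iff' measurableSet_Ioi).2 (ae_of_all _ fun r hr => hpt r hr)
    have heval : (∫ r in Ioi (0:ℝ),
            (C₁ * (r ^ ((n:ℝ)-1) * Real.exp (-(γ/t) * r^2))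
              + C₂ * (r ^ (2*p+((n:ℝ)-1)) * Real.exp (-(γ/t) * r^2))))
        = C₁ * ((γ/t) ^ (-(((n:ℝ)-1)+1)/2) * (1/2) * Real.Gamma ((((n:ℝ)-1)+1)/2))
          + C₂ * ((γ/t) ^ (-((2*p+((n:ℝ)-1))+1)/2) * (1/2)
              * Real.Gamma (((2*p+((n:ℝ)-1))+1)/2)) := by
      rw [integral_add hint1 hint2, integral_const_mul, integral_const_mul,
        gauss_eval hβ0 hc₁, gauss_eval hβ0 hc₂]
    have halg : C₁ * ((γ/t) ^ (-(((n:ℝ)-1)+1)/2) * (1/2) * Real.Gamma ((((n:ℝ)-1)+1)/2))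
          + C₂ * ((γ/t) ^ (-((2*p+((n:ℝ)-1))+1)/2) * (1/2)
              * Real.Gamma (((2*p+((n:ℝ)-1))+1)/2)) = K * t ^ e := by
      have hA : A = b^(-(θ*p)) * t^((n:ℝ)/2 * (-(θ*p))) := by
        rw [hAdef, Real.mul_rpow hb0.le (Real.rpow_nonneg ht0.le _), ← Real.rpow_mul ht0.le]
      have hdiv : ∀ s : ℝ, (γ/t) ^ s = γ ^ s * t ^ (-s) := fun s => by
        rw [Real.div_rpow hγ0.le ht0.le, div_eq_mul_inv, ← Real.rpow_neg ht0.le]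
      have hT1 : t^((n:ℝ)/2 * (-(θ*p))) * t^(-p) * t^(-(-(((n:ℝ)-1)+1)/2)) = t^e := by
        rw [← Real.rpow_add ht0, ← Real.rpow_add ht0, hedef]
        congr 1; ring
      have hT2 : t^((n:ℝ)/2 * (-(θ*p))) * t^(-(2*p)) * t^(-(-((2*p+((n:ℝ)-1))+1)/2)) = t^e := by
        rw [← Real.rpow_add ht0, ← Real.rpow_add ht0, hedef]
        congr 1; ring
      have h1 : C₁ * ((γ/t) ^ (-(((n:ℝ)-1)+1)/2) * (1/2) * Real.Gamma ((((n:ℝ)-1)+1)/2))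
          = 2*2^p * b^(-(θ*p)) * γ^(-(((n:ℝ)-1)+1)/2) * (1/2)
              * Real.Gamma ((((n:ℝ)-1)+1)/2) * t^e := by
        rw [hC₁def, hA, hdiv, ← hT1]; ring
      have h2 : C₂ * ((γ/t) ^ (-((2*p+((n:ℝ)-1))+1)/2) * (1/2)
              * Real.Gamma (((2*p+((n:ℝ)-1))+1)/2))
          = 2*2^p * b^(-(θ*p)) * (2*μ)^(-p) * γ^(-((2*p+((n:ℝ)-1))+1)/2) * (1/2)
              * Real.Gamma (((2*p+((n:ℝ)-1))+1)/2) * t^e := by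
        rw [hC₂def, hA, hdiv, ← hT2]; ring
      rw [h1, h2, hKdef]; ring
    calc (∫ r in Ioi (0:ℝ),
          (|deriv (fun ρ => ubar t ρ) r| ^ p + |ubar t r / r| ^ p) * r ^ ((n:ℝ)-1))
        ≤ _ := hmono
      _ = _ := heval
      _ = K * t ^ e := halg
  have hlower : ∀ t ∈ Ioi (0:ℝ),
      0 ≤ ∫ r in Ioi (0:ℝ),
          (|deriv (fun ρ => ubar t ρ) r| ^ p + |ubar t r / r| ^ p) * r ^ ((n:ℝ)-1) := by
    intro t ht
    apply setIntegral_nonneg measurableSet_Ioi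
    intro r hr
    have h1 : (0:ℝ) ≤ |deriv (fun ρ => ubar t ρ) r| ^ p := Real.rpow_nonneg (abs_nonneg _) _
    have h2 : (0:ℝ) ≤ |ubar t r / r| ^ p := Real.rpow_nonneg (abs_nonneg _) _
    have h3 : (0:ℝ) ≤ r ^ ((n:ℝ)-1) := Real.rpow_nonneg (le_of_lt hr) _
    positivity
  have htK : Tendsto (fun t : ℝ => K * t ^ e) (𝓝[>] 0) (𝓝 0) := by
    have h1 : Tendsto (fun t : ℝ => t ^ e) (𝓝 0) (𝓝 ((0:ℝ) ^ e)) :=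
      (Real.continuousAt_rpow_const 0 e (Or.inr he.le)).tendsto
    rw [Real.zero_rpow he.ne'] at h1
    have h2 : Tendsto (fun t : ℝ => K * t ^ e) (𝓝[>] 0) (𝓝 (K * 0)) :=
      (h1.const_mul K).mono_left (nhdsWithin_le_nhds (s := Ioi 0))
    simpa using h2
  refine tendsto_of_tendsto_of_tendsto_of_le_of_le' tendsto_const_nhds htK ?_ ?_
  · filter_upwards [self_mem_nhdsWithin] with t ht using hlower t ht
  · filter_upwards [self_mem_nhdsWithin] with t ht using hupper t ht
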